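/- Let G be a connected simple graph on a finite vertex set V and let P : V → Fin k (k ≥ 1) be a surjective map such that each cluster P⁻¹(r) induces a connected subgraph of G and every cross edge of G with respect to P is a bridge of G. Let {a,b} be an internal edge of some cluster r (P a = P b = r) that is not a bridge of G, and let G' be the graph obtained from G by deleting {a,b}. Let p : V → ℝ satisfy ∑_{v ∈ V} p v = 0, let θ : V → ℝ satisfy G.lapMatrix ℝ *ᵥ θ = p, and let θ' : V → ℝ satisfy G'.lapMatrix ℝ *ᵥ θ' = p. Then θ' u − θ' v = θ u − θ v for all u, v ∈ V with P u = P v ≠ r, and θ' c − θ' d = θ c − θ d for every cross edge {c,d} of G; that is, in a tree-partitioned network the failure of a non-bridge line changes the DC power flows only on lines inside the cluster where it occurred. -/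

import Mathlib

open Matrix

variable {V : Type*}

/-- The set of cross edges of `G` with respect to the partition map `P`:
edges of `G` whose two endpoints lie in different clusters. -/
def crossEdges {k : ℕ} (G : SimpleGraph V) (P : V → Fin k) : Set (Sym2 V) :=
  {e | e ∈ G.edgeSet ∧ ¬ (Sym2.map P e).IsDiag}

/-- The quotient (reduced) graph of `G` under `P`: vertices are the `k` clusters,
and distinct clusters `r`, `s` are adjacent iff `G` has a cross edge with one
endpoint in cluster `r` and the other in cluster `s`. -/
def quotientGraph {k : ℕ} (G : SimpleGraph V) (P : V → Fin k) : SimpleGraph (Fin k) where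
  Adj r s := r ≠ s ∧ ∃ u v, G.Adj u v ∧ P u = r ∧ P v = s
  symm := by
    constructor
    rintro r s ⟨hrs, u, v, huv, hu, hv⟩
    exact ⟨hrs.symm, v, u, huv.symm, hv, hu⟩
  loopless := by
    constructor
    rintro r ⟨hrr, -⟩
    exact hrr rfl

/-- `P` has no parallel cross edges: distinct cross edges of `G` join distinct
(unordered) pairs of clusters. -/
def NoParallelCrossEdges {k : ℕ} (G : SimpleGraph V) (P : V → Fin k) : Prop :=
  ∀ e₁ ∈ crossEdges G P, ∀ e₂ ∈ crossEdges G P, Sym2.map P e₁ = Sym2.map P e₂ → e₁ = e₂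


private lemma lap_mulVec_if [Fintype V] [DecidableEq V] (H : SimpleGraph V) [DecidableRel H.Adj]
    (θ : V → ℝ) (w : V) :
    (H.lapMatrix ℝ *ᵥ θ) w = ∑ x, if H.Adj w x then θ w - θ x else 0 := by
  classical
  rw [SimpleGraph.lapMatrix_mulVec_apply, Finset.sum_ite, Finset.sum_const_zero, add_zero,
    Finset.sum_sub_distrib, Finset.sum_const, nsmul_eq_mul]
  have h : Finset.univ.filter (H.Adj w) = H.neighborFinset w := by
    ext x; simp
  rw [h, SimpleGraph.degree]

private lemma bridge_flow [Fintype V] [DecidableEq V] (H : SimpleGraph V) [DecidableRel H.Adj]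
    {c d : V} (hcd : H.Adj c d) (S : Finset V) (hc : c ∈ S) (hd : d ∉ S)
    (hclosed : ∀ w ∈ S, ∀ x, x ∉ S → H.Adj w x → w = c ∧ x = d)
    (θ p : V → ℝ) (hθ : H.lapMatrix ℝ *ᵥ θ = p) :
    θ c - θ d = ∑ w ∈ S, p w := by
  have hsplit : ∑ w ∈ S, p w
      = (∑ w ∈ S, ∑ x ∈ S, (if H.Adj w x then θ w - θ x else 0))
        + ∑ w ∈ S, ∑ x ∈ Sᶜ, (if H.Adj w x then θ w - θ x else 0) := by
    rw [← Finset.sum_add_distrib]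
    refine Finset.sum_congr rfl fun w _ => ?_
    rw [Finset.sum_add_sum_compl, ← lap_mulVec_if, hθ]
  have hzero : ∑ w ∈ S, ∑ x ∈ S, (if H.Adj w x then θ w - θ x else 0) = 0 := by
    set T := ∑ w ∈ S, ∑ x ∈ S, (if H.Adj w x then θ w - θ x else 0) with hT
    have : T = -T := by
      conv_lhs => rw [hT, Finset.sum_comm]
      rw [← Finset.sum_neg_distrib]
      refine Finset.sum_congr rfl fun x _ => ?_
      rw [← Finset.sum_neg_distrib]
      refine Finset.sum_congr rfl fun w _ => ?_
      by_cases h : H.Adj w x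
      · simp [h, h.symm]
      · have h' : ¬H.Adj x w := fun h' => h h'.symm
        simp [h, h']
    linarith
  have hcompl : ∑ w ∈ S, ∑ x ∈ Sᶜ, (if H.Adj w x then θ w - θ x else 0) = θ c - θ d := by
    have key : ∀ w ∈ S, ∑ x ∈ Sᶜ, (if H.Adj w x then θ w - θ x else 0)
        = if w = c then θ c - θ d else 0 := by
      intro w hw
      have h1 : ∀ x ∈ Sᶜ, (if H.Adj w x then θ w - θ x else 0)
          = if w = c then (if x = d then θ c - θ d else 0) else 0 := by
        intro x hx
        rw [Finset.mem_compl] at hx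
        by_cases hadj : H.Adj w x
        · obtain ⟨rfl, rfl⟩ := hclosed w hw x hx hadj
          simp [hadj]
        · have : ¬(w = c ∧ x = d) := by rintro ⟨rfl, rfl⟩; exact hadj hcd
          by_cases h2 : w = c
          · subst h2
            have : x ≠ d := fun h => this ⟨rfl, h⟩
            simp [hadj, this]
          · simp [hadj, h2]
      rw [Finset.sum_congr rfl h1]
      by_cases h2 : w = c
      · subst h2
        simp only [if_true]
        rw [Finset.sum_ite_eq' Sᶜ d]
        simp [Finset.mem_compl.mpr hd]
      · simp [h2]
    rw [Finset.sum_congr rfl key, Finset.sum_ite_eq' S c, if_pos hc]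
  rw [hsplit, hzero, hcompl, zero_add]

open scoped Classical in
theorem tree_partition_localizes_line_failure [Fintype V] [DecidableEq V] {k : ℕ}
    (hk : 1 ≤ k) (G : SimpleGraph V) [DecidableRel G.Adj] (hG : G.Connected)
    (P : V → Fin k) (hsurj : Function.Surjective P)
    (hcl : ∀ s : Fin k, (G.induce (P ⁻¹' {s})).Connected)
    (hbr : ∀ e ∈ crossEdges G P, G.IsBridge e)
    (r : Fin k) (a b : V) (hab : G.Adj a b) (ha : P a = r) (hb : P b = r)
    (hnb : ¬ G.IsBridge s(a, b))
    (p : V → ℝ) (hp : ∑ v, p v = 0)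
    (θ : V → ℝ) (hθ : G.lapMatrix ℝ *ᵥ θ = p)
    (θ' : V → ℝ) (hθ' : (G.deleteEdges {s(a, b)}).lapMatrix ℝ *ᵥ θ' = p) :
    (∀ u v : V, P u = P v → P u ≠ r → θ' u - θ' v = θ u - θ v) ∧
      (∀ c d : V, G.Adj c d → P c ≠ P d → θ' c - θ' d = θ c - θ d) := by
  set G' := G.deleteEdges {s(a, b)} with hG'def
  -- Part 2: cross edge flows are preserved
  have hcross : ∀ c d : V, G.Adj c d → P c ≠ P d → θ' c - θ' d = θ c - θ d := by
    intro c d hcd hPcd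
    have hne : s(c, d) ≠ s(a, b) := by
      intro hh
      rw [Sym2.eq_iff] at hh
      rcases hh with ⟨rfl, rfl⟩ | ⟨rfl, rfl⟩
      · exact hPcd (ha.trans hb.symm)
      · exact hPcd (hb.trans ha.symm)
    have hmem : s(c, d) ∈ crossEdges G P := by
      refine ⟨G.mem_edgeSet.mpr hcd, ?_⟩
      rw [Sym2.map_pair_eq, Sym2.isDiag_iff_proj_eq]
      exact hPcd
    have hbridge := hbr _ hmem
    have hnr : ¬ (G.deleteEdges {s(c, d)}).Reachable c d :=
      SimpleGraph.isBridge_iff.mp hbridge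
    set S : Finset V :=
      Finset.univ.filter (fun w => (G.deleteEdges {s(c, d)}).Reachable c w) with hS
    have hcS : c ∈ S := Finset.mem_filter.mpr ⟨Finset.mem_univ c, SimpleGraph.Reachable.refl c⟩
    have hdS : d ∉ S := by simpa [hS] using hnr
    have hclosed : ∀ w ∈ S, ∀ x, x ∉ S → G.Adj w x → w = c ∧ x = d := by
      intro w hw x hx hadj
      simp only [hS, Finset.mem_filter, Finset.mem_univ, true_and] at hw hx
      by_cases he : s(w, x) = s(c, d)
      · rw [Sym2.eq_iff] at he
        rcases he with ⟨rfl, rfl⟩ | ⟨rfl, rfl⟩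
        · exact ⟨rfl, rfl⟩
        · exact absurd hw hnr
      · exact absurd (hw.trans
          (SimpleGraph.Adj.reachable (by simp [SimpleGraph.deleteEdges_adj, hadj, he]))) hx
    have h1 := bridge_flow G hcd S hcS hdS hclosed θ p hθ
    have hcd' : G'.Adj c d := by simp [hG'def, SimpleGraph.deleteEdges_adj, hcd, hne]
    have hclosed' : ∀ w ∈ S, ∀ x, x ∉ S → G'.Adj w x → w = c ∧ x = d := by
      intro w hw x hx hadj
      exact hclosed w hw x hx (SimpleGraph.deleteEdges_adj.mp hadj).1
    have h2 := bridge_flow G' hcd' S hcS hdS hclosed' θ' p hθ'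
    rw [h1, h2]
  refine ⟨?_, hcross⟩
  -- Part 1
  set δ : V → ℝ := fun v => θ' v - θ v with hδdef
  have hδc : ∀ c d : V, G.Adj c d → P c ≠ P d → δ c = δ d := by
    intro c d hcd hPcd
    have := hcross c d hcd hPcd
    simp only [hδdef]
    linarith
  -- harmonicity of δ away from a, b
  have hharm : ∀ w, w ≠ a → w ≠ b → ∑ x, (if G'.Adj w x then δ w - δ x else 0) = 0 := by
    intro w hwa hwb
    have hsame : ∀ x, (G'.Adj w x ↔ G.Adj w x) := by
      intro x
      rw [hG'def, SimpleGraph.deleteEdges_adj]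
      refine ⟨fun h => h.1, fun h => ⟨h, ?_⟩⟩
      simp only [Set.mem_singleton_iff, Sym2.eq_iff]
      rintro (⟨rfl, rfl⟩ | ⟨rfl, rfl⟩)
      · exact hwa rfl
      · exact hwb rfl
    have e1 : ∑ x, (if G'.Adj w x then δ w - δ x else 0)
        = (∑ x, (if G'.Adj w x then θ' w - θ' x else 0))
          - ∑ x, (if G.Adj w x then θ w - θ x else 0) := by
      rw [← Finset.sum_sub_distrib]
      refine Finset.sum_congr rfl fun x _ => ?_
      by_cases h : G'.Adj w x
      · rw [if_pos h, if_pos h, if_pos ((hsame x).mp h)]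
        simp only [hδdef]; ring
      · rw [if_neg h, if_neg h, if_neg (fun h' => h ((hsame x).mpr h'))]
        ring
    rw [e1, ← lap_mulVec_if, ← lap_mulVec_if, hθ, hθ']
    ring
  -- harmonicity within a cluster s ≠ r
  have hin : ∀ w, P w ≠ r → ∑ x ∈ Finset.univ.filter (fun x => P x = P w),
      (if G'.Adj w x then δ w - δ x else 0) = 0 := by
    intro w hw
    have hwa : w ≠ a := fun h => hw (by rw [h, ha])
    have hwb : w ≠ b := fun h => hw (by rw [h, hb])
    have htot := hharm w hwa hwb
    rw [← Finset.sum_filter_add_sum_filter_not Finset.univ (fun x => P x = P w)] at htot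
    have h2 : ∑ x ∈ Finset.univ.filter (fun x => ¬ P x = P w),
        (if G'.Adj w x then δ w - δ x else 0) = 0 := by
      refine Finset.sum_eq_zero fun x hx => ?_
      simp only [Finset.mem_filter, Finset.mem_univ, true_and] at hx
      by_cases hadj : G'.Adj w x
      · have hGadj : G.Adj w x := (SimpleGraph.deleteEdges_adj.mp hadj).1
        have := hδc w x hGadj (fun h => hx h.symm)
        rw [if_pos hadj, this, sub_self]
      · rw [if_neg hadj]
    linarith
  -- energy argument: δ constant on edges within a cluster ≠ r
  intro u v huv hur
  set C : Finset V := Finset.univ.filter (fun x => P x = P u) with hC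
  have henergy : ∑ w ∈ C, ∑ x ∈ C, (if G'.Adj w x then (δ w - δ x)^2 else 0) = 0 := by
    have hterm : ∀ w x : V, (if G'.Adj w x then (δ w - δ x)^2 else 0)
        = δ w * (if G'.Adj w x then δ w - δ x else 0)
          - δ x * (if G'.Adj w x then δ w - δ x else 0) := by
      intro w x
      by_cases h : G'.Adj w x
      · simp only [if_pos h]; ring
      · simp only [if_neg h]; ring
    have hinC : ∀ w ∈ C, ∑ x ∈ C, (if G'.Adj w x then δ w - δ x else 0) = 0 := by
      intro w hw
      simp only [hC, Finset.mem_filter, Finset.mem_univ, true_and] at hw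
      have := hin w (hw ▸ hur)
      rw [hw] at this
      exact this
    calc ∑ w ∈ C, ∑ x ∈ C, (if G'.Adj w x then (δ w - δ x)^2 else 0)
        = (∑ w ∈ C, δ w * ∑ x ∈ C, (if G'.Adj w x then δ w - δ x else 0))
          - ∑ w ∈ C, ∑ x ∈ C, δ x * (if G'.Adj w x then δ w - δ x else 0) := by
          rw [← Finset.sum_sub_distrib]
          refine Finset.sum_congr rfl fun w _ => ?_
          rw [Finset.mul_sum, ← Finset.sum_sub_distrib]
          exact Finset.sum_congr rfl fun x _ => hterm w x
      _ = 0 - ∑ x ∈ C, δ x * ∑ w ∈ C, (if G'.Adj w x then δ w - δ x else 0) := by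
          rw [Finset.sum_comm (s := C) (t := C)]
          congr 1
          · rw [Finset.sum_eq_zero]
            intro w hw; rw [hinC w hw, mul_zero]
          · exact Finset.sum_congr rfl fun x _ => (Finset.mul_sum _ _ _).symm
      _ = 0 := by
          rw [zero_sub, neg_eq_zero, Finset.sum_eq_zero]
          intro x hx
          have : ∑ w ∈ C, (if G'.Adj w x then δ w - δ x else 0)
              = - ∑ w ∈ C, (if G'.Adj x w then δ x - δ w else 0) := by
            rw [← Finset.sum_neg_distrib]
            refine Finset.sum_congr rfl fun w _ => ?_
            by_cases h : G'.Adj w x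
            · rw [if_pos h, if_pos h.symm]; ring
            · rw [if_neg h, if_neg (fun h' => h h'.symm), neg_zero]
          rw [this, hinC x hx, neg_zero, mul_zero]
  have hedge : ∀ w ∈ C, ∀ x ∈ C, G'.Adj w x → δ w = δ x := by
    intro w hw x hx hadj
    have h1 := (Finset.sum_eq_zero_iff_of_nonneg (fun w _ => Finset.sum_nonneg
      (fun x _ => by positivity))).mp henergy w hw
    have h2 := (Finset.sum_eq_zero_iff_of_nonneg (fun x _ => by positivity)).mp h1 x hx
    rw [if_pos hadj] at h2
    have := pow_eq_zero_iff (n := 2) (by norm_num) |>.mp h2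
    linarith [sub_eq_zero.mp this]
  -- connect u to v within the cluster
  have hwalk : ∀ (x y : ↥(P ⁻¹' {P u})) (w : (G.induce (P ⁻¹' {P u})).Walk x y),
      δ x.1 = δ y.1 := by
    intro x y w
    induction w with
    | nil => rfl
    | @cons x y z h q ih =>
      have hGadj : G.Adj x.1 y.1 := h
      have hPx : P x.1 = P u := x.2
      have hPy : P y.1 = P u := y.2
      have hxC : x.1 ∈ C := by simp [hC, hPx]
      have hyC : y.1 ∈ C := by simp [hC, hPy]
      have hadj' : G'.Adj x.1 y.1 := by
        rw [hG'def, SimpleGraph.deleteEdges_adj]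
        refine ⟨hGadj, ?_⟩
        simp only [Set.mem_singleton_iff, Sym2.eq_iff]
        rintro (⟨h1, h2⟩ | ⟨h1, h2⟩)
        · exact hur (by rw [← hPx, h1, ha])
        · exact hur (by rw [← hPx, h1, hb])
      exact (hedge _ hxC _ hyC hadj').trans ih
  have hreach := (hcl (P u)).preconnected ⟨u, rfl⟩ ⟨v, huv.symm⟩
  obtain ⟨w⟩ := hreach
  have := hwalk _ _ w
  simp only [hδdef] at this
  linarith
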